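/- Let Γ and H be finite groups with Γ acting on H, and let V be a finite abelian group with an action of H ⋊ Γ, with gcd(|V|·|H|, |Γ|) = 1. Let 1 → V → G → H → 1 be an extension of Γ-groups inducing the given action on V. Then the group of Γ-equivariant automorphisms of G that restrict to the identity on V and induce the identity on H has order |H¹(H ⋊ Γ, V)| · |V^Γ| / |V^{H⋊Γ}|. -/

import Mathlib

namespace Stmt10

variable {K V : Type*} [Group K] [CommGroup V]

/-- 1-cocycles of `K` with values in `V` (action `ρ`). -/
def oneCocycles (ρ : K →* MulAut V) : Subgroup (K → V) where
  carrier := {t | ∀ x y : K, t (x * y) = t x * ρ x (t y)}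
  one_mem' := by intro x y; simp
  mul_mem' := by
    intro a b ha hb x y
    simp only [Pi.mul_apply, ha x y, hb x y, map_mul]
    exact mul_mul_mul_comm _ _ _ _
  inv_mem' := by
    intro a ha x y
    simp [Pi.inv_apply, ha x y, map_inv, mul_inv, mul_comm]

/-- 1-coboundaries of `K` with values in `V` (action `ρ`). -/
def oneCoboundaries (ρ : K →* MulAut V) : Subgroup (K → V) where
  carrier := {t | ∃ v : V, ∀ x : K, t x = v⁻¹ * ρ x v}
  one_mem' := ⟨1, by simp⟩
  mul_mem' := by
    rintro a b ⟨v, hv⟩ ⟨w, hw⟩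
    refine ⟨v * w, fun x => ?_⟩
    simp only [Pi.mul_apply, hv x, hw x, map_mul, mul_inv]
    exact mul_mul_mul_comm _ _ _ _
  inv_mem' := by
    rintro a ⟨v, hv⟩
    refine ⟨v⁻¹, fun x => ?_⟩
    simp [Pi.inv_apply, hv x, mul_inv, mul_comm]

instance (ρ : K →* MulAut V) :
    ((oneCoboundaries ρ).comap (oneCocycles ρ).subtype).Normal :=
  Subgroup.normal_of_comm _

/-- The first group cohomology `H¹(K, V) = Z¹(K,V)/B¹(K,V)`. -/
def H1 (ρ : K →* MulAut V) :=
  oneCocycles ρ ⧸ ((oneCoboundaries ρ).comap (oneCocycles ρ).subtype)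

end Stmt10

namespace Stmt10Aux
open Stmt10

variable {K V : Type*} [Group K] [CommGroup V]

lemma cocycle_one {ρ : K →* MulAut V} {t : K → V} (ht : t ∈ oneCocycles ρ) : t 1 = 1 := by
  have h := ht 1 1
  simp only [mul_one, map_one, MulAut.one_apply] at h
  exact (left_eq_mul.mp h)

/-- The coboundary homomorphism `V →* (K → V)`. -/
def bnd (ρ : K →* MulAut V) : V →* (K → V) where
  toFun v k := v⁻¹ * ρ k v
  map_one' := by funext k; simp
  map_mul' v w := by
    funext k
    simp only [Pi.mul_apply, map_mul, mul_inv]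
    exact mul_mul_mul_comm _ _ _ _

lemma bnd_mem (ρ : K →* MulAut V) (v : V) : bnd ρ v ∈ oneCoboundaries ρ :=
  ⟨v, fun _ => rfl⟩

lemma bnd_range (ρ : K →* MulAut V) : (bnd ρ).range = oneCoboundaries ρ := by
  ext t
  constructor
  · rintro ⟨v, rfl⟩; exact ⟨v, fun _ => rfl⟩
  · rintro ⟨v, hv⟩
    exact ⟨v, by funext k; exact (hv k).symm⟩

lemma coboundaries_le_cocycles (ρ : K →* MulAut V) : oneCoboundaries ρ ≤ oneCocycles ρ := by
  rintro t ⟨v, hv⟩ x y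
  simp only [hv, map_mul, MulAut.mul_apply, map_inv, mul_inv]
  group

lemma card_coboundaries_mul_card_fixed (ρ : K →* MulAut V) [Finite V] :
    Nat.card (oneCoboundaries ρ) * Nat.card {v : V // ∀ k : K, ρ k v = v} = Nat.card V := by
  have h1 : Nat.card V = Nat.card (V ⧸ (bnd ρ).ker) * Nat.card (bnd ρ).ker :=
    Subgroup.card_eq_card_quotient_mul_card_subgroup _
  have h2 : Nat.card (V ⧸ (bnd ρ).ker) = Nat.card (oneCoboundaries ρ) := by
    rw [Nat.card_congr (QuotientGroup.quotientKerEquivRange (bnd ρ)).toEquiv, bnd_range]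
  have h3 : Nat.card ((bnd ρ).ker) = Nat.card {v : V // ∀ k : K, ρ k v = v} := by
    refine Nat.card_congr (Equiv.subtypeEquivRight fun v => ?_)
    constructor
    · intro h k
      have h' : v⁻¹ * ρ k v = 1 := congrFun h k
      exact (inv_mul_eq_one.mp h').symm
    · intro h
      funext k
      show v⁻¹ * ρ k v = 1
      rw [h k, inv_mul_cancel]
  rw [h1, h2, h3]

lemma cocycles_eq_coboundaries (ρ : K →* MulAut V) [Finite K] [Finite V]
    (h : Nat.Coprime (Nat.card K) (Nat.card V)) :
    oneCocycles ρ = oneCoboundaries ρ := by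
  refine le_antisymm ?_ (coboundaries_le_cocycles ρ)
  intro t ht
  rcases eq_or_ne (Nat.card V) 1 with hV | hV
  · haveI : Subsingleton V := Nat.card_eq_one_iff_unique.mp hV |>.1
    exact ⟨1, fun x => Subsingleton.elim _ _⟩
  · haveI := Fintype.ofFinite K
    have hV1 : 1 < Nat.card V := lt_of_le_of_ne Nat.card_pos hV.symm
    obtain ⟨m, -, hm⟩ := Nat.exists_mul_mod_eq_one_of_coprime h hV1
    set n := Nat.card K with hn
    set w := ∏ γ : K, t γ with hw
    have key : ∀ δ : K, t δ ^ n * ρ δ w = w := by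
      intro δ
      have h0 : w = ∏ γ : K, t (δ * γ) :=
        (Fintype.prod_equiv (Equiv.mulLeft δ) (fun γ => t (δ * γ)) t fun γ => rfl).symm
      calc t δ ^ n * ρ δ w = ∏ γ : K, (t δ * ρ δ (t γ)) := by
            rw [Finset.prod_mul_distrib, Finset.prod_const, map_prod]
            congr 1
            rw [Finset.card_univ, hn, Nat.card_eq_fintype_card]
        _ = ∏ γ : K, t (δ * γ) := by
            refine Finset.prod_congr rfl fun γ _ => (ht δ γ).symm
        _ = w := h0.symm
    refine ⟨(w ^ m)⁻¹, fun δ => ?_⟩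
    have h1 : t δ ^ n = w * (ρ δ w)⁻¹ := eq_mul_inv_iff_mul_eq.mpr (key δ)
    have h2 : t δ ^ Nat.card V = 1 := pow_card_eq_one'
    calc t δ = t δ ^ (n * m % Nat.card V) := by rw [hm, pow_one]
      _ = t δ ^ (n * m) := (pow_eq_pow_mod _ h2).symm
      _ = (t δ ^ n) ^ m := by rw [pow_mul]
      _ = (w * (ρ δ w)⁻¹) ^ m := by rw [h1]
      _ = ((w ^ m)⁻¹)⁻¹ * ρ δ ((w ^ m)⁻¹) := by
          rw [mul_pow, inv_inv, map_inv, map_pow, inv_pow]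

end Stmt10Aux

open Stmt10Aux

open Stmt10 in
/-- Let `1 → V → G → H → 1` be an extension of `Γ`-groups inducing a given `H ⋊ Γ`-action
`ρ` on the abelian group `V`, with `gcd(|V|·|H|, |Γ|) = 1`.  Then the group of
`Γ`-equivariant automorphisms of `G` restricting to the identity on `V` and inducing the
identity on `H` has order `|H¹(H ⋊ Γ, V)| · |V^Γ| / |V^{H⋊Γ}|`. -/
theorem stmt_10 (Γ : Type*) [Group Γ] [Finite Γ] (H : Type*) [Group H] [Finite H]
    (φ : Γ →* MulAut H) (V : Type*) [CommGroup V] [Finite V]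
    (ρ : (H ⋊[φ] Γ) →* MulAut V)
    (hcop : Nat.Coprime (Nat.card V * Nat.card H) (Nat.card Γ))
    (G : Type*) [Group G] [Finite G] (act : Γ →* MulAut G) (i : V →* G) (p : G →* H)
    (hi : Function.Injective i) (hp : Function.Surjective p) (hex : i.range = p.ker)
    (hpe : ∀ (γ : Γ) (g : G), p (act γ g) = φ γ (p g))
    (hconj : ∀ (g : G) (v : V), g * i v * g⁻¹ = i (ρ (SemidirectProduct.inl (p g)) v))
    (hact : ∀ (γ : Γ) (v : V), act γ (i v) = i (ρ (SemidirectProduct.inr γ) v)) :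
    Nat.card {e : G ≃* G //
        (∀ (γ : Γ) (g : G), e (act γ g) = act γ (e g)) ∧
        (∀ v : V, e (i v) = i v) ∧ (∀ g : G, p (e g) = p g)} *
      Nat.card {v : V // ∀ k : H ⋊[φ] Γ, ρ k v = v}
    = Nat.card (H1 ρ) *
        Nat.card {v : V // ∀ γ : Γ, ρ (SemidirectProduct.inr γ) v = v} := by

  classical
  set K := H ⋊[φ] Γ with hK
  haveI : Finite K := Finite.of_surjective
    (fun q : H × Γ => (⟨q.1, q.2⟩ : K)) (fun k => ⟨(k.left, k.right), rfl⟩)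
  -- the restriction-to-Γ homomorphism on cocycles
  set Ψ : (oneCocycles ρ) →* (Γ → V) :=
    { toFun := fun s => fun γ => s.1 (SemidirectProduct.inr γ)
      map_one' := rfl
      map_mul' := fun s s' => rfl } with hΨ
  set ρΓ : Γ →* MulAut V := ρ.comp SemidirectProduct.inr with hρΓ
  have hVΓ : Nat.Coprime (Nat.card Γ) (Nat.card V) :=
    ((Nat.Coprime.coprime_dvd_left (dvd_mul_right _ _) hcop)).symm
  -- range of Ψ is exactly the cocycles of Γ
  have hrange : Ψ.range = oneCocycles ρΓ := by
    apply le_antisymm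
    · rintro u ⟨s, rfl⟩
      intro x y
      show s.1 (SemidirectProduct.inr (x * y)) = _
      rw [map_mul]
      exact s.2 _ _
    · intro u hu
      rw [cocycles_eq_coboundaries ρΓ hVΓ] at hu
      obtain ⟨v, hv⟩ := hu
      refine ⟨⟨bnd ρ v, coboundaries_le_cocycles ρ (bnd_mem ρ v)⟩, ?_⟩
      funext γ
      exact (hv γ).symm
  have hZ : Nat.card (oneCocycles ρ) = Nat.card (Ψ.range) * Nat.card (Ψ.ker) := by
    rw [Subgroup.card_eq_card_quotient_mul_card_subgroup Ψ.ker,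
      Nat.card_congr (QuotientGroup.quotientKerEquivRange Ψ).toEquiv]
  have hH1 : Nat.card (oneCocycles ρ) = Nat.card (H1 ρ) * Nat.card (oneCoboundaries ρ) := by
    rw [Subgroup.card_eq_card_quotient_mul_card_subgroup
      ((oneCoboundaries ρ).comap (oneCocycles ρ).subtype)]
    congr 1
    exact Nat.card_congr (Subgroup.subgroupOfEquivOfLe (coboundaries_le_cocycles ρ)).toEquiv
  have hf4 : Nat.card (Ψ.range) *
      Nat.card {v : V // ∀ γ : Γ, ρ (SemidirectProduct.inr γ) v = v} = Nat.card V := by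
    rw [hrange, cocycles_eq_coboundaries ρΓ hVΓ]
    exact card_coboundaries_mul_card_fixed ρΓ
  have hf5 : Nat.card (oneCoboundaries ρ) * Nat.card {v : V // ∀ k : K, ρ k v = v} =
      Nat.card V := card_coboundaries_mul_card_fixed ρ
  -- the subtype of Γ-equivariant 1-cocycles of H
  set T := {t : H → V // (∀ x y : H, t (x * y) = t x * ρ (SemidirectProduct.inl x) (t y)) ∧
      ∀ (γ : Γ) (h : H), t (φ γ h) = ρ (SemidirectProduct.inr γ) (t h)} with hT
  have t_one : ∀ t : H → V, (∀ x y : H, t (x * y) = t x * ρ (SemidirectProduct.inl x) (t y)) →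
      t 1 = 1 := by
    intro t ht
    have h := ht 1 1
    simp only [mul_one, map_one, MulAut.one_apply] at h
    exact left_eq_mul.mp h
  -- kernel of Ψ is equivalent to T
  have eqvKT : (Ψ.ker) ≃ T := by
    refine
      { toFun := fun s => ⟨fun h => s.1.1 (SemidirectProduct.inl h), ?_, ?_⟩
        invFun := fun t => ⟨⟨fun k => t.1 k.left, ?_⟩, ?_⟩
        left_inv := ?_
        right_inv := ?_ }
    · intro x y
      show s.1.1 (SemidirectProduct.inl (x * y)) = s.1.1 (SemidirectProduct.inl x) *
        ρ (SemidirectProduct.inl x) (s.1.1 (SemidirectProduct.inl y))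
      rw [map_mul]
      exact s.1.2 _ _
    · intro γ h
      have hs : ∀ δ : Γ, s.1.1 (SemidirectProduct.inr δ) = 1 := fun δ =>
        congrFun (MonoidHom.mem_ker.mp s.2) δ
      have e1 : (SemidirectProduct.inl (φ γ h) : K) =
          SemidirectProduct.inr γ * (SemidirectProduct.inl h * SemidirectProduct.inr γ⁻¹) := by
        rw [SemidirectProduct.inl_aut, mul_assoc]
      show s.1.1 (SemidirectProduct.inl (φ γ h)) =
        ρ (SemidirectProduct.inr γ) (s.1.1 (SemidirectProduct.inl h))
      rw [e1, s.1.2, s.1.2 (SemidirectProduct.inl h) (SemidirectProduct.inr γ⁻¹), hs γ, hs γ⁻¹,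
        map_one, mul_one, one_mul]
    · intro k k'
      show t.1 ((k * k').left) = t.1 k.left * ρ k (t.1 k'.left)
      rw [SemidirectProduct.mul_left, t.2.1, t.2.2]
      congr 1
      rw [← MulAut.mul_apply, ← map_mul, SemidirectProduct.inl_left_mul_inr_right]
    · show (fun γ => t.1 ((SemidirectProduct.inr γ : K).left)) = 1
      funext γ
      show t.1 (1 : H) = 1
      exact t_one t.1 t.2.1
    · intro s
      refine Subtype.ext (Subtype.ext (funext fun k => ?_))
      show s.1.1 (SemidirectProduct.inl k.left) = s.1.1 k
      have hs : ∀ δ : Γ, s.1.1 (SemidirectProduct.inr δ) = 1 := fun δ =>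
        congrFun (MonoidHom.mem_ker.mp s.2) δ
      conv_rhs => rw [← SemidirectProduct.inl_left_mul_inr_right k]
      rw [s.1.2, hs, map_one, mul_one]
    · intro t
      exact Subtype.ext (funext fun h => rfl)
  -- the automorphism subtype is equivalent to T
  set A := {e : G ≃* G //
      (∀ (γ : Γ) (g : G), e (act γ g) = act γ (e g)) ∧
      (∀ v : V, e (i v) = i v) ∧ (∀ g : G, p (e g) = p g)} with hA
  have hpi : ∀ v : V, p (i v) = 1 := by
    intro v
    have : i v ∈ i.range := ⟨v, rfl⟩
    rw [hex] at this
    exact this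
  have hker_i : ∀ g : G, p g = 1 → ∃ v : V, i v = g := by
    intro g hg
    have : g ∈ p.ker := hg
    rw [← hex] at this
    exact this
  set σ : H → G := Function.surjInv hp with hσdef
  have hσ : ∀ h, p (σ h) = h := fun h => Function.surjInv_eq hp h
  have hEx : ∀ (e : A) (g : G), ∃ v : V, i v = e.1 g * g⁻¹ := by
    intro e g
    apply hker_i
    rw [map_mul, map_inv, e.2.2.2 g, mul_inv_cancel]
  set tA : A → (H → V) := fun e h => (hEx e (σ h)).choose with htAdef
  have htA : ∀ (e : A) (g : G), i (tA e (p g)) = e.1 g * g⁻¹ := by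
    intro e g
    set x := σ (p g) with hx
    obtain ⟨v, hv⟩ : ∃ v : V, i v = x⁻¹ * g := by
      apply hker_i
      have hpx : p x = p g := hσ (p g)
      rw [map_mul, map_inv, hpx, inv_mul_cancel]
    have hspec : i (tA e (p g)) = e.1 x * x⁻¹ := (hEx e x).choose_spec
    have hg : g = x * i v := by rw [hv, mul_inv_cancel_left]
    rw [hspec, hg, map_mul, e.2.2.1 v, mul_inv_rev]
    group
  have htA_cocycle : ∀ (e : A) (x y : H),
      tA e (x * y) = tA e x * ρ (SemidirectProduct.inl x) (tA e y) := by
    intro e x y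
    apply hi
    have h2 : i (tA e x) = e.1 (σ x) * (σ x)⁻¹ := by
      have := htA e (σ x); rwa [hσ] at this
    have h3 : i (tA e y) = e.1 (σ y) * (σ y)⁻¹ := by
      have := htA e (σ y); rwa [hσ] at this
    have h4 : σ x * i (tA e y) * (σ x)⁻¹ = i (ρ (SemidirectProduct.inl x) (tA e y)) := by
      have := hconj (σ x) (tA e y); rwa [hσ] at this
    calc i (tA e (x * y)) = e.1 (σ x * σ y) * (σ x * σ y)⁻¹ := by
          have := htA e (σ x * σ y); rwa [map_mul, hσ, hσ] at this
      _ = (e.1 (σ x) * (σ x)⁻¹) * (σ x * (e.1 (σ y) * (σ y)⁻¹) * (σ x)⁻¹) := by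
          rw [map_mul]; group
      _ = i (tA e x) * (σ x * i (tA e y) * (σ x)⁻¹) := by rw [h2, h3]
      _ = i (tA e x) * i (ρ (SemidirectProduct.inl x) (tA e y)) := by rw [h4]
      _ = i (tA e x * ρ (SemidirectProduct.inl x) (tA e y)) := (map_mul i _ _).symm
  have htA_equiv : ∀ (e : A) (γ : Γ) (h : H),
      tA e (φ γ h) = ρ (SemidirectProduct.inr γ) (tA e h) := by
    intro e γ h
    apply hi
    have h2 : i (tA e h) = e.1 (σ h) * (σ h)⁻¹ := by
      have := htA e (σ h); rwa [hσ] at this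
    calc i (tA e (φ γ h)) = e.1 (act γ (σ h)) * (act γ (σ h))⁻¹ := by
          have := htA e (act γ (σ h)); rwa [hpe, hσ] at this
      _ = act γ (e.1 (σ h) * (σ h)⁻¹) := by rw [e.2.1, map_mul, map_inv]
      _ = act γ (i (tA e h)) := by rw [h2]
      _ = i (ρ (SemidirectProduct.inr γ) (tA e h)) := hact γ (tA e h)
  -- the inverse construction: from an equivariant cocycle, an automorphism
  have eT_mk : ∀ t : T, ∃ e : A, ∀ g : G, e.1 g = i (t.1 (p g)) * g := by
    intro t
    have ht1 : t.1 1 = 1 := t_one t.1 t.2.1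
    set f : G →* G :=
      { toFun := fun g => i (t.1 (p g)) * g
        map_one' := by simp [ht1]
        map_mul' := by
          intro g g'
          show i (t.1 (p (g * g'))) * (g * g') = (i (t.1 (p g)) * g) * (i (t.1 (p g')) * g')
          rw [map_mul p, t.2.1, map_mul i]
          have h4 : i (ρ (SemidirectProduct.inl (p g)) (t.1 (p g'))) =
              g * i (t.1 (p g')) * g⁻¹ := (hconj g (t.1 (p g'))).symm
          rw [h4]
          group } with hf
    have hinj : Function.Injective f := by
      rw [injective_iff_map_eq_one]
      intro g hg
      have hpg : p g = 1 := by
        have : p (f g) = p g := by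
          show p (i (t.1 (p g)) * g) = p g
          rw [map_mul, hpi, one_mul]
        rw [hg, map_one] at this
        exact this.symm
      have : f g = g := by
        show i (t.1 (p g)) * g = g
        rw [hpg, ht1, map_one, one_mul]
      rw [← this, hg]
    set e : G ≃* G := MulEquiv.ofBijective f (Finite.injective_iff_bijective.mp hinj) with he
    have hee : ∀ g : G, e g = i (t.1 (p g)) * g := fun g => rfl
    refine ⟨⟨e, ?_, ?_, ?_⟩, hee⟩
    · intro γ g
      rw [hee, hee, map_mul, hpe]
      rw [t.2.2, ← hact]
    · intro v
      rw [hee, hpi, ht1, map_one, one_mul]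
    · intro g
      rw [hee, map_mul, hpi, one_mul]
  have eqvAT : A ≃ T := by
    refine
      { toFun := fun e => ⟨tA e, htA_cocycle e, htA_equiv e⟩
        invFun := fun t => (eT_mk t).choose
        left_inv := ?_
        right_inv := ?_ }
    · intro e
      obtain ⟨e', he'⟩ := Exists.intro (eT_mk ⟨tA e, htA_cocycle e, htA_equiv e⟩).choose_spec rfl
      refine Subtype.ext (MulEquiv.toEquiv_injective (Equiv.ext fun g => ?_))
      show ((eT_mk ⟨tA e, htA_cocycle e, htA_equiv e⟩).choose).1 g = e.1 g
      rw [(eT_mk ⟨tA e, htA_cocycle e, htA_equiv e⟩).choose_spec g]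
      show i (tA e (p g)) * g = e.1 g
      rw [htA e g, inv_mul_cancel_right]
    · intro t
      refine Subtype.ext (funext fun h => ?_)
      show tA ((eT_mk t).choose) h = t.1 h
      apply hi
      have h1 := htA ((eT_mk t).choose) (σ h)
      rw [hσ] at h1
      rw [h1, (eT_mk t).choose_spec (σ h), hσ, mul_inv_cancel_right]
  have hAker : Nat.card A = Nat.card (Ψ.ker) :=
    Nat.card_congr (eqvAT.trans eqvKT.symm)
  -- final arithmetic
  have hposB : 0 < Nat.card (oneCoboundaries ρ) := Nat.card_pos
  have hposR : 0 < Nat.card (Ψ.range) := Nat.card_pos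
  apply Nat.eq_of_mul_eq_mul_right (Nat.mul_pos hposR hposB)
  calc Nat.card A * Nat.card {v : V // ∀ k : K, ρ k v = v} *
        (Nat.card (Ψ.range) * Nat.card (oneCoboundaries ρ))
      = (Nat.card (Ψ.range) * Nat.card (Ψ.ker)) *
        (Nat.card (oneCoboundaries ρ) * Nat.card {v : V // ∀ k : K, ρ k v = v}) := by
        rw [hAker]; ring
    _ = Nat.card (oneCocycles ρ) * Nat.card V := by rw [← hZ, hf5]
    _ = (Nat.card (H1 ρ) * Nat.card (oneCoboundaries ρ)) *
        (Nat.card (Ψ.range) * Nat.card {v : V // ∀ γ : Γ, ρ (SemidirectProduct.inr γ) v = v}) := by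
        rw [← hH1, hf4]
    _ = Nat.card (H1 ρ) * Nat.card {v : V // ∀ γ : Γ, ρ (SemidirectProduct.inr γ) v = v} *
        (Nat.card (Ψ.range) * Nat.card (oneCoboundaries ρ)) := by ring
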